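/- Let a < b be positive integers and n a positive integer. A graph G has the property that G − V' has an [a,b]-factor for every n-subset V' ⊆ V(G) if and only if for every S ⊆ V(G) with |S| ≥ n, δ_G(a,b;S) := b|S| − a|T| + d_{G−S}(T) ≥ bn, where T = {x ∈ V(G) − S : d_{G−S}(x) ≤ a−1}. -/

import Mathlib

open Finset
open scoped Classical

/-- Degree of a vertex in a simple graph (as `Set.ncard` of its neighbor set). -/
noncomputable def deg {W : Type*} (G : SimpleGraph W) (v : W) : ℕ := (G.neighborSet v).ncard

/-- `G` has an `[a,b]`-factor: a spanning subgraph `H ≤ G` with `a ≤ deg_H v ≤ b` for all `v`. -/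
def HasABFactor {W : Type*} (G : SimpleGraph W) (a b : ℕ) : Prop :=
  ∃ H : SimpleGraph W, H ≤ G ∧ ∀ v, a ≤ deg H v ∧ deg H v ≤ b

/-- Degree of `x` in `G - S` (neighbors of `x` outside `S`). -/
noncomputable def degS {W : Type*} (G : SimpleGraph W) (S : Set W) (x : W) : ℕ :=
  (G.neighborSet x \ S).ncard

/-- Number of isolated vertices of `G - S`. -/
noncomputable def nIso {W : Type*} (G : SimpleGraph W) (S : Set W) : ℕ :=
  {x | x ∉ S ∧ degS G S x = 0}.ncard

/-- `d_{G-S}(T)`: sum of degrees in `G - S` of the vertices of `T`. -/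
noncomputable def dSum {W : Type*} (G : SimpleGraph W) (S T : Set W) : ℕ :=
  ∑ᶠ x ∈ T, degS G S x

/-- `T = {x ∈ V(G) - S : d_{G-S}(x) ≤ a - 1}`. -/
def Tset {W : Type*} (G : SimpleGraph W) (S : Set W) (a : ℕ) : Set W :=
  {x | x ∉ S ∧ degS G S x ≤ a - 1}

/-- Isolated toughness of a graph. -/
noncomputable def isoT {W : Type*} [Fintype W] (G : SimpleGraph W) : ℝ :=
  if G = ⊤ then (Fintype.card W : ℝ) - 1
  else sInf {r : ℝ | ∃ S : Set W, 2 ≤ nIso G S ∧ r = (S.ncard : ℝ) / (nIso G S : ℝ)}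

set_option linter.unusedSectionVars false

section Basic

variable {V : Type*} [Fintype V]

lemma deg_eq_card (H : SimpleGraph V) (v : V) : deg H v = (H.neighborSet v).toFinset.card :=
  Set.ncard_eq_toFinset_card' _

lemma deg_le_deg {H K : SimpleGraph V} (h : H ≤ K) (v : V) : deg H v ≤ deg K v :=
  Set.ncard_le_ncard (fun _ hq => h hq) (Set.toFinite _)

lemma doublecount (H : SimpleGraph V) (A B : Finset V) :
    ∑ x ∈ A, (B.filter (H.Adj x)).card = ∑ u ∈ B, (A.filter (H.Adj u)).card := by
  simp only [Finset.card_filter]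
  rw [Finset.sum_comm]
  refine Finset.sum_congr rfl fun u _ => Finset.sum_congr rfl fun x _ => ?_
  simp [SimpleGraph.adj_comm]

lemma dSum_eq_sum (G : SimpleGraph V) (S T : Set V) :
    dSum G S T = ∑ x ∈ T.toFinset, degS G S x := by
  rw [dSum, ← finsum_mem_coe_finset, Set.coe_toFinset]

lemma degS_eq (G : SimpleGraph V) (S : Set V) (x : V) :
    degS G S x = ((G.neighborSet x).toFinset \ S.toFinset).card := by
  rw [degS, Set.ncard_eq_toFinset_card', Set.toFinset_diff]

end Basic

section Surgery

variable {V : Type*} [Fintype V]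

noncomputable def addE (H : SimpleGraph V) (x u : V) : SimpleGraph V :=
  H ⊔ SimpleGraph.fromEdgeSet {s(x, u)}

noncomputable def swapE (H : SimpleGraph V) (u x y : V) : SimpleGraph V :=
  H.deleteEdges {s(u, x)} ⊔ SimpleGraph.fromEdgeSet {s(u, y)}

variable {H G : SimpleGraph V} {u x y v : V}

lemma addE_adj (H : SimpleGraph V) (x u p q : V) :
    (addE H x u).Adj p q ↔ H.Adj p q ∨ (s(p, q) = s(x, u) ∧ p ≠ q) := by
  simp [addE, SimpleGraph.fromEdgeSet_adj]

lemma addE_le (hHG : H ≤ G) (hg : G.Adj x u) : addE H x u ≤ G := by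
  intro p q hpq
  rw [addE_adj] at hpq
  rcases hpq with h | ⟨he, _⟩
  · exact hHG h
  · rcases Sym2.eq_iff.mp he with ⟨rfl, rfl⟩ | ⟨rfl, rfl⟩
    · exact hg
    · exact hg.symm

lemma addE_nbr_fst (hxu : x ≠ u) :
    (addE H x u).neighborSet x = insert u (H.neighborSet x) := by
  ext q
  simp only [SimpleGraph.mem_neighborSet, addE_adj, Set.mem_insert_iff, Sym2.eq_iff]
  aesop

lemma addE_nbr_snd (hxu : x ≠ u) :
    (addE H x u).neighborSet u = insert x (H.neighborSet u) := by
  ext q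
  simp only [SimpleGraph.mem_neighborSet, addE_adj, Set.mem_insert_iff, Sym2.eq_iff]
  aesop

lemma addE_nbr_other (hvx : v ≠ x) (hvu : v ≠ u) :
    (addE H x u).neighborSet v = H.neighborSet v := by
  ext q
  simp only [SimpleGraph.mem_neighborSet, addE_adj, Sym2.eq_iff]
  aesop

lemma addE_deg_fst (hxu : x ≠ u) (hnadj : ¬H.Adj x u) :
    deg (addE H x u) x = deg H x + 1 := by
  have hm : u ∉ H.neighborSet x := hnadj
  rw [deg, addE_nbr_fst hxu, Set.ncard_insert_of_notMem hm (Set.toFinite _)]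
  rfl

lemma addE_deg_snd (hxu : x ≠ u) (hnadj : ¬H.Adj x u) :
    deg (addE H x u) u = deg H u + 1 := by
  have hm : x ∉ H.neighborSet u := fun h => hnadj (H.adj_symm h)
  rw [deg, addE_nbr_snd hxu, Set.ncard_insert_of_notMem hm (Set.toFinite _)]
  rfl

lemma addE_deg_other (hvx : v ≠ x) (hvu : v ≠ u) :
    deg (addE H x u) v = deg H v := by
  rw [deg, addE_nbr_other hvx hvu]; rfl

lemma addE_deg_ge (v : V) : deg H v ≤ deg (addE H x u) v :=
  deg_le_deg le_sup_left v

-- swapE lemmas; hypotheses: H.Adj u x, ¬H.Adj u y, x ≠ y, u ≠ y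
lemma swapE_adj (H : SimpleGraph V) (u x y p q : V) :
    (swapE H u x y).Adj p q ↔
      (H.Adj p q ∧ s(p, q) ≠ s(u, x)) ∨ (s(p, q) = s(u, y) ∧ p ≠ q) := by
  simp [swapE, SimpleGraph.fromEdgeSet_adj, SimpleGraph.deleteEdges_adj]

lemma swapE_le (hHG : H ≤ G) (hg : G.Adj u y) : swapE H u x y ≤ G := by
  intro p q hpq
  rw [swapE_adj] at hpq
  rcases hpq with ⟨h, _⟩ | ⟨he, _⟩
  · exact hHG h
  · rcases Sym2.eq_iff.mp he with ⟨rfl, rfl⟩ | ⟨rfl, rfl⟩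
    · exact hg
    · exact hg.symm

lemma swapE_nbr_u (hux : H.Adj u x) (huy : ¬H.Adj u y) (hxy : x ≠ y) (huy' : u ≠ y) :
    (swapE H u x y).neighborSet u = insert y (H.neighborSet u \ {x}) := by
  have hux' : u ≠ x := H.ne_of_adj hux
  ext q
  simp only [SimpleGraph.mem_neighborSet, swapE_adj, Set.mem_insert_iff, Set.mem_diff,
    Set.mem_singleton_iff, Sym2.eq_iff, ne_eq]
  aesop

lemma swapE_nbr_x (hux : H.Adj u x) (huy : ¬H.Adj u y) (hxy : x ≠ y) (huy' : u ≠ y) :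
    (swapE H u x y).neighborSet x = H.neighborSet x \ {u} := by
  have hux' : u ≠ x := H.ne_of_adj hux
  ext q
  simp only [SimpleGraph.mem_neighborSet, swapE_adj, Set.mem_diff,
    Set.mem_singleton_iff, Sym2.eq_iff, ne_eq]
  aesop

lemma swapE_nbr_y (hux : H.Adj u x) (huy : ¬H.Adj u y) (hxy : x ≠ y) (huy' : u ≠ y) :
    (swapE H u x y).neighborSet y = insert u (H.neighborSet y) := by
  have hux' : u ≠ x := H.ne_of_adj hux
  ext q
  simp only [SimpleGraph.mem_neighborSet, swapE_adj, Set.mem_insert_iff, Sym2.eq_iff, ne_eq]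
  aesop

lemma swapE_nbr_other (hvu : v ≠ u) (hvx : v ≠ x) (hvy : v ≠ y) :
    (swapE H u x y).neighborSet v = H.neighborSet v := by
  ext q
  simp only [SimpleGraph.mem_neighborSet, swapE_adj, Sym2.eq_iff, ne_eq]
  aesop

lemma swapE_deg_u (hux : H.Adj u x) (huy : ¬H.Adj u y) (hxy : x ≠ y) (huy' : u ≠ y) :
    deg (swapE H u x y) u = deg H u := by
  have hxm : x ∈ H.neighborSet u := hux
  have hym : y ∉ H.neighborSet u \ {x} := fun h => huy h.1
  have h1 : 1 ≤ (H.neighborSet u).ncard :=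
    (Set.ncard_pos (Set.toFinite _)).2 ⟨x, hxm⟩
  rw [deg, swapE_nbr_u hux huy hxy huy', Set.ncard_insert_of_notMem hym (Set.toFinite _),
    Set.ncard_diff_singleton_of_mem hxm]
  rw [deg]
  omega

lemma swapE_deg_x (hux : H.Adj u x) (huy : ¬H.Adj u y) (hxy : x ≠ y) (huy' : u ≠ y) :
    deg (swapE H u x y) x = deg H x - 1 := by
  have hum : u ∈ H.neighborSet x := H.adj_symm hux
  rw [deg, swapE_nbr_x hux huy hxy huy', Set.ncard_diff_singleton_of_mem hum]
  rfl

lemma swapE_deg_y (hux : H.Adj u x) (huy : ¬H.Adj u y) (hxy : x ≠ y) (huy' : u ≠ y) :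
    deg (swapE H u x y) y = deg H y + 1 := by
  have hum : u ∉ H.neighborSet y := fun h => huy (H.adj_symm h)
  rw [deg, swapE_nbr_y hux huy hxy huy', Set.ncard_insert_of_notMem hum (Set.toFinite _)]
  rfl

lemma swapE_deg_other (hvu : v ≠ u) (hvx : v ≠ x) (hvy : v ≠ y) :
    deg (swapE H u x y) v = deg H v := by
  rw [deg, swapE_nbr_other hvu hvx hvy]; rfl

lemma sum_two_update {f g : V → ℕ} (hxy : x ≠ y)
    (h : ∀ v, v ≠ x → v ≠ y → f v = g v) :
    ∑ v, f v + (g x + g y) = ∑ v, g v + (f x + f y) := by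
  classical
  have hx : x ∈ (univ : Finset V) := mem_univ x
  have hy : y ∈ (univ : Finset V).erase x := mem_erase.2 ⟨Ne.symm hxy, mem_univ y⟩
  have hf : ∑ v, f v = f x + (f y + ∑ v ∈ ((univ : Finset V).erase x).erase y, f v) := by
    rw [Finset.add_sum_erase _ f hy, Finset.add_sum_erase _ f hx]
  have hg : ∑ v, g v = g x + (g y + ∑ v ∈ ((univ : Finset V).erase x).erase y, g v) := by
    rw [Finset.add_sum_erase _ g hy, Finset.add_sum_erase _ g hx]
  have he : ∑ v ∈ ((univ : Finset V).erase x).erase y, f v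
      = ∑ v ∈ ((univ : Finset V).erase x).erase y, g v := by
    refine Finset.sum_congr rfl fun v hv => ?_
    rw [mem_erase, mem_erase] at hv
    exact h v hv.2.1 hv.1
  omega

end Surgery

section MaxSetup

variable {V : Type*} [Fintype V]

def Valid (G H : SimpleGraph V) (b : ℕ) : Prop := H ≤ G ∧ ∀ v, deg H v ≤ b

noncomputable def keyF (G H : SimpleGraph V) (a : ℕ) : ℕ :=
  (∑ v, min a (deg H v)) * (∑ v, deg G v + 1) + ∑ v, deg H v

def IsBest (G : SimpleGraph V) (a b : ℕ) (H : SimpleGraph V) : Prop :=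
  Valid G H b ∧ ∀ H', Valid G H' b → keyF G H' a ≤ keyF G H a

lemma exists_isMax (G : SimpleGraph V) (a b : ℕ) : ∃ H, IsBest G a b H := by
  have hfin : Finite (SimpleGraph V) :=
    Finite.of_injective (fun H => H.Adj)
      (fun H K h => by ext p q; exact iff_of_eq (congrFun (congrFun h p) q))
  have hbot : (⊥ : SimpleGraph V) ∈ {H : SimpleGraph V | Valid G H b} := by
    refine ⟨bot_le, fun v => ?_⟩
    have : (⊥ : SimpleGraph V).neighborSet v = ∅ := by
      ext q; simp [SimpleGraph.mem_neighborSet]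
    rw [deg, this, Set.ncard_empty]
    exact Nat.zero_le b
  obtain ⟨H, hH, hmax⟩ := Set.exists_max_image {H : SimpleGraph V | Valid G H b}
    (fun H => keyF G H a) (Set.toFinite _) ⟨⊥, hbot⟩
  exact ⟨H, hH, fun H' h' => hmax H' h'⟩

lemma esize_le {G H : SimpleGraph V} (hHG : H ≤ G) : ∑ v, deg H v ≤ ∑ v, deg G v :=
  Finset.sum_le_sum fun v _ => deg_le_deg hHG v

lemma key_lt_phi {G H H' : SimpleGraph V} {a : ℕ} (hH : H ≤ G)
    (h : ∑ v, min a (deg H v) < ∑ v, min a (deg H' v)) : keyF G H a < keyF G H' a := by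
  have h1 := esize_le hH
  have h2 : (0:ℕ) ≤ ∑ v, deg H' v := Nat.zero_le _
  rw [keyF, keyF]
  calc (∑ v, min a (deg H v)) * (∑ v, deg G v + 1) + ∑ v, deg H v
      < (∑ v, min a (deg H v)) * (∑ v, deg G v + 1) + (∑ v, deg G v + 1) := by omega
    _ = ((∑ v, min a (deg H v)) + 1) * (∑ v, deg G v + 1) := by ring
    _ ≤ (∑ v, min a (deg H' v)) * (∑ v, deg G v + 1) := Nat.mul_le_mul_right _ h
    _ ≤ _ := Nat.le_add_right _ _

lemma key_lt_esize {G H H' : SimpleGraph V} {a : ℕ}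
    (hphi : ∑ v, min a (deg H v) = ∑ v, min a (deg H' v))
    (h : ∑ v, deg H v < ∑ v, deg H' v) : keyF G H a < keyF G H' a := by
  rw [keyF, keyF, hphi]
  omega

lemma deg_eq_b_of_max {G H : SimpleGraph V} {a b : ℕ} (hab : a < b)
    (hmax : IsBest G a b H) {y u : V} (hy : deg H y ≤ a)
    (hg : G.Adj y u) (hh : ¬H.Adj y u) : deg H u = b := by
  by_contra hne
  have hub' : deg H u < b := lt_of_le_of_ne (hmax.1.2 u) hne
  have hyu : y ≠ u := G.ne_of_adj hg
  set H' := addE H y u with hH'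
  have hdy : deg H' y = deg H y + 1 := addE_deg_fst hyu hh
  have hdu : deg H' u = deg H u + 1 := addE_deg_snd hyu hh
  have hval : Valid G H' b := by
    refine ⟨addE_le hmax.1.1 hg, fun v => ?_⟩
    by_cases hvy : v = y
    · subst hvy; rw [hdy]; omega
    by_cases hvu : v = u
    · subst hvu; rw [hdu]; omega
    rw [addE_deg_other hvy hvu]
    exact hmax.1.2 v
  have hphi : ∑ v, min a (deg H v) ≤ ∑ v, min a (deg H' v) :=
    Finset.sum_le_sum fun v _ => min_le_min le_rfl (addE_deg_ge v)
  have hesz : ∑ v, deg H v < ∑ v, deg H' v := by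
    have := sum_two_update (f := deg H') (g := deg H) hyu
      (fun v hvy hvu => addE_deg_other hvy hvu)
    omega
  have hkey : keyF G H a < keyF G H' a := by
    rcases lt_or_eq_of_le hphi with hlt | heq
    · exact key_lt_phi hmax.1.1 hlt
    · exact key_lt_esize heq hesz
  exact absurd (hmax.2 H' hval) (not_le.mpr hkey)

end MaxSetup

inductive Der {V : Type*} (G H : SimpleGraph V) (a : ℕ) : ℕ → V → Bool → Prop
  | root (w : V) (h : deg H w < a) : Der G H a 0 w false
  | step1 {k : ℕ} {y u : V} (hd : Der G H a k y false) (hg : G.Adj y u) (hh : ¬H.Adj y u) :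
      Der G H a (k + 1) u true
  | step2 {k : ℕ} {u x : V} (hd : Der G H a k u true) (hh : H.Adj u x) :
      Der G H a (k + 1) x false

section NoBad

variable {V : Type*} [Fintype V]

lemma der_false_inv {G H : SimpleGraph V} {a k : ℕ} {z : V}
    (h : Der G H a k z false) :
    (k = 0 ∧ deg H z < a) ∨
      ∃ (j : ℕ) (y u : V), k = j + 2 ∧ Der G H a j y false ∧ G.Adj y u ∧ ¬H.Adj y u ∧
        H.Adj u z := by
  cases h with
  | root w hw => exact Or.inl ⟨rfl, hw⟩
  | step2 hd hh =>
    cases hd with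
    | step1 hd2 hg hh2 => exact Or.inr ⟨_, _, _, rfl, hd2, hg, hh2, hh⟩

lemma no_bad (G : SimpleGraph V) (a b : ℕ) (ha : 1 ≤ a) (hab : a < b) :
    ∀ (k : ℕ) (H : SimpleGraph V), IsBest G a b H → ∀ x, Der G H a k x false → deg H x ≤ a := by
  by_contra hcon
  push_neg at hcon
  obtain ⟨k0, H0, hmax0, x0, hder0, hdeg0⟩ := hcon
  have hP : ∃ k, ∃ H : SimpleGraph V, ∃ x, IsBest G a b H ∧ Der G H a k x false ∧ a < deg H x :=
    ⟨k0, H0, x0, hmax0, hder0, hdeg0⟩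
  classical
  obtain ⟨H, x, hmax, hder, hdeg⟩ := Nat.find_spec hP
  set ℓ := Nat.find hP with hℓdef
  have hmin : ∀ m, m < ℓ → ∀ (H' : SimpleGraph V) (x' : V),
      IsBest G a b H' → Der G H' a m x' false → deg H' x' ≤ a := by
    intro m hm H' x' hmax' hder'
    by_contra hgt
    exact Nat.find_min hP hm ⟨H', x', hmax', hder', lt_of_not_ge hgt⟩
  -- unpack the derivation: ℓ = j + 2 with root chain ... y (even, j) → u (odd) → x
  obtain ⟨j, y, u, hℓ, hdy, hgyu, hhyu, hux⟩ :
      ∃ (j : ℕ) (y u : V), ℓ = j + 2 ∧ Der G H a j y false ∧ G.Adj y u ∧ ¬H.Adj y u ∧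
        H.Adj u x := by
    rcases der_false_inv hder with ⟨_, hlt⟩ | hgood
    · omega
    · exact hgood
  have hyle : deg H y ≤ a := hmin j (by omega) H y hmax hdy
  have hub : deg H u = b := deg_eq_b_of_max hab hmax hyle hgyu hhyu
  -- basic distinctness
  have hxy : x ≠ y := fun e => by rw [e] at hdeg; omega
  have huy' : u ≠ y := fun e => by rw [e] at hub; omega
  have hadjux : H.Adj u x := hux
  have hnadjuy : ¬H.Adj u y := fun h => hhyu (H.adj_symm h)
  set H' := swapE H u x y with hH'def
  have hdu' : deg H' u = deg H u := swapE_deg_u hadjux hnadjuy hxy huy'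
  have hdx' : deg H' x = deg H x - 1 := swapE_deg_x hadjux hnadjuy hxy huy'
  have hdy' : deg H' y = deg H y + 1 := swapE_deg_y hadjux hnadjuy hxy huy'
  have hother' : ∀ v, v ≠ u → v ≠ x → v ≠ y → deg H' v = deg H v :=
    fun v h1 h2 h3 => swapE_deg_other h1 h2 h3
  have hval' : Valid G H' b := by
    refine ⟨swapE_le hmax.1.1 hgyu.symm, fun v => ?_⟩
    by_cases h1 : v = u
    · rw [h1, hdu']; exact hmax.1.2 u
    by_cases h2 : v = x
    · rw [h2, hdx']; have := hmax.1.2 x; omega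
    by_cases h3 : v = y
    · rw [h3, hdy']; omega
    rw [hother' v h1 h2 h3]; exact hmax.1.2 v
  -- if y is strictly deficient, strict improvement: contradiction
  rcases lt_or_eq_of_le hyle with hylt | hyeq
  · -- phi increases
    have hphi : ∑ v, min a (deg H v) < ∑ v, min a (deg H' v) := by
      have := sum_two_update (x := x) (y := y) (f := fun v => min a (deg H' v))
        (g := fun v => min a (deg H v)) hxy
        (fun v hvx hvy => by
          show min a (deg H' v) = min a (deg H v)
          by_cases hvu : v = u
          · rw [hvu, hdu']
          · rw [hother' v hvu hvx hvy])
      have hfx : min a (deg H' x) = a := by rw [hdx']; omega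
      have hgx : min a (deg H x) = a := by omega
      have hfy : min a (deg H' y) = deg H y + 1 := by rw [hdy']; omega
      have hgy : min a (deg H y) = deg H y := by omega
      omega
    exact absurd (hmax.2 H' hval') (not_le.mpr (key_lt_phi hmax.1.1 hphi))
  -- tie case: deg H y = a; H' is also a maximizer
  have hyeq' : deg H y = a := hyeq
  have hphi : ∑ v, min a (deg H v) = ∑ v, min a (deg H' v) := by
    have := sum_two_update (x := x) (y := y) (f := fun v => min a (deg H' v))
      (g := fun v => min a (deg H v)) hxy
      (fun v hvx hvy => by
        show min a (deg H' v) = min a (deg H v)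
        by_cases hvu : v = u
        · rw [hvu, hdu']
        · rw [hother' v hvu hvx hvy])
    have hfx : min a (deg H' x) = a := by rw [hdx']; omega
    have hgx : min a (deg H x) = a := by omega
    have hfy : min a (deg H' y) = a := by rw [hdy']; omega
    have hgy : min a (deg H y) = a := by omega
    omega
  have hesz : ∑ v, deg H v = ∑ v, deg H' v := by
    have := sum_two_update (x := x) (y := y) (f := deg H') (g := deg H) hxy
      (fun v hvx hvy => by
        by_cases hvu : v = u
        · rw [hvu, hdu']
        · rw [hother' v hvu hvx hvy])
    have h1 : deg H' x = deg H x - 1 := hdx'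
    have h2 : deg H' y = deg H y + 1 := hdy'
    omega
  have hkey : keyF G H' a = keyF G H a := by rw [keyF, keyF, hphi, hesz]
  have hmax' : IsBest G a b H' := ⟨hval', fun H'' h'' => by rw [hkey]; exact hmax.2 H'' h''⟩
  -- transfer the prefix derivation to H'
  have hTR : ∀ (m : ℕ) (z : V) (p : Bool), Der G H a m z p → m ≤ j → Der G H' a m z p := by
    intro m z p hd
    induction hd with
    | root w hw =>
      intro _
      refine Der.root w ?_
      have h1 : w ≠ u := fun e => by rw [e] at hw; omega
      have h2 : w ≠ x := fun e => by rw [e] at hw; omega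
      have h3 : w ≠ y := fun e => by rw [e] at hw; omega
      rw [hother' w h1 h2 h3]; exact hw
    | step1 hd2 hg hh2 ih =>
      rename_i k1 y1 u1
      intro hle
      refine Der.step1 (ih (by omega)) hg ?_
      intro hadj'
      rw [hH'def, swapE_adj] at hadj'
      rcases hadj' with ⟨hA, _⟩ | ⟨he, _⟩
      · exact hh2 hA
      · rcases Sym2.eq_iff.mp he with ⟨he1, he2⟩ | ⟨he1, he2⟩
        · -- y1 = u, u1 = y : but deg H y1 ≤ a < b = deg H u
          have hle1 := hmin k1 (by omega) H y1 hmax hd2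
          rw [he1] at hle1
          omega
        · -- y1 = y, u1 = u : shortcut gives bad x at k1 + 2 < ℓ
          have hd2' : Der G H a k1 y false := he1 ▸ hd2
          have hD : Der G H a (k1 + 2) x false :=
            Der.step2 (Der.step1 hd2' hgyu hhyu) hux
          have := hmin (k1 + 2) (by omega) H x hmax hD
          omega
    | step2 hd2 hh2 ih =>
      rename_i k1 u1 x1
      intro hle
      refine Der.step2 (ih (by omega)) ?_
      rw [hH'def, swapE_adj]
      by_cases hcol : s(u1, x1) = s(u, x)
      · exfalso
        rcases Sym2.eq_iff.mp hcol with ⟨he1, he2⟩ | ⟨he1, he2⟩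
        · -- u1 = u, x1 = x : x even-derivable at k1+1 ≤ j < ℓ
          have hD : Der G H a (k1 + 1) x false := he2 ▸ Der.step2 hd2 hh2
          have := hmin (k1 + 1) (by omega) H x hmax hD
          omega
        · -- u1 = x, x1 = u : u even-derivable, deg H u = b > a
          have hD : Der G H a (k1 + 1) u false := he2 ▸ Der.step2 hd2 hh2
          have := hmin (k1 + 1) (by omega) H u hmax hD
          omega
      · exact Or.inl ⟨hh2, hcol⟩
  have hDy' : Der G H' a j y false := hTR j y false hdy le_rfl
  have hbad' : a < deg H' y := by rw [hdy']; omega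
  exact Nat.find_min hP (show j < ℓ by omega) ⟨H', y, hmax', hDy', hbad'⟩

lemma odd_deg {G H : SimpleGraph V} {a b : ℕ} (ha : 1 ≤ a) (hab : a < b)
    (hmax : IsBest G a b H) {k : ℕ} {u : V} (hd : Der G H a k u true) : deg H u = b := by
  cases hd with
  | step1 hd2 hg hh =>
    exact deg_eq_b_of_max hab hmax (no_bad G a b ha hab _ H hmax _ hd2) hg hh

end NoBad

section Sufficiency

variable {V : Type*} [Fintype V]

lemma sufficiency (G : SimpleGraph V) (a b : ℕ) (ha : 1 ≤ a) (hab : a < b)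
    (hC : ∀ S : Set V, a * (Tset G S a).ncard ≤ b * S.ncard + dSum G S (Tset G S a)) :
    HasABFactor G a b := by
  obtain ⟨H, hmax⟩ := exists_isMax G a b
  by_cases hdef : ∀ v, a ≤ deg H v
  · exact ⟨H, hmax.1.1, fun v => ⟨hdef v, hmax.1.2 v⟩⟩
  push_neg at hdef
  obtain ⟨w, hw⟩ := hdef
  exfalso
  set Sset : Set V := {q | ∃ k, Der G H a k q true} with hSdef
  set Te : Set V := {z | ∃ k, Der G H a k z false} with hTedef
  have hwTe : w ∈ Te := ⟨0, Der.root w hw⟩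
  have f1 : ∀ z ∈ Te, deg H z ≤ a := by
    rintro z ⟨k, hk⟩; exact no_bad G a b ha hab k H hmax z hk
  have f2 : ∀ q ∈ Sset, deg H q = b := by
    rintro q ⟨k, hk⟩; exact odd_deg ha hab hmax hk
  have f3 : ∀ z ∈ Te, ∀ q, G.Adj z q → ¬H.Adj z q → q ∈ Sset := by
    rintro z ⟨k, hk⟩ q hg hh; exact ⟨k + 1, Der.step1 hk hg hh⟩
  have f4 : ∀ q ∈ Sset, ∀ z, H.Adj q z → z ∈ Te := by
    rintro q ⟨k, hk⟩ z hh; exact ⟨k + 1, Der.step2 hk hh⟩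
  have f5 : ∀ z ∈ Te, z ∉ Sset := by
    intro z hz hzS
    have h1 := f1 z hz; have h2 := f2 z hzS; omega
  set SF := Sset.toFinset with hSF
  set TeF := Te.toFinset with hTeF
  set TF := (Tset G Sset a).toFinset with hTF
  have hnb : ∀ z ∈ Te, (G.neighborSet z).toFinset \ SF = (H.neighborSet z).toFinset \ SF := by
    intro z hz
    ext q
    simp only [Finset.mem_sdiff, Set.mem_toFinset, SimpleGraph.mem_neighborSet, hSF]
    constructor
    · rintro ⟨hgq, hqS⟩
      refine ⟨?_, hqS⟩
      by_contra hnh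
      exact hqS (by simpa using f3 z hz q hgq hnh)
    · rintro ⟨hh, hq⟩
      exact ⟨hmax.1.1 hh, hq⟩
  have hsplit : ∀ z : V, ((H.neighborSet z).toFinset \ SF).card + (SF.filter (H.Adj z)).card
      = deg H z := by
    intro z
    have hfe : SF.filter (H.Adj z) = (H.neighborSet z).toFinset ∩ SF := by
      ext q
      simp only [Finset.mem_filter, Finset.mem_inter, Set.mem_toFinset,
        SimpleGraph.mem_neighborSet]
      exact ⟨fun h => ⟨h.2, h.1⟩, fun h => ⟨h.2, h.1⟩⟩
    rw [hfe, deg_eq_card, Finset.card_sdiff_add_card_inter]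
  have hdegS : ∀ z ∈ Te, degS G Sset z + (SF.filter (H.Adj z)).card = deg H z := by
    intro z hz
    rw [degS_eq, ← hSF, hnb z hz]
    exact hsplit z
  have hTeT : ∀ z ∈ Te, z ∈ Tset G Sset a := by
    intro z hz
    refine ⟨f5 z hz, ?_⟩
    have hca : deg H z ≤ a := f1 z hz
    have hds := hdegS z hz
    obtain ⟨k, hk⟩ := hz
    rcases der_false_inv hk with ⟨_, hlt⟩ | ⟨j, y, u, hke, hdy2, hg2, hh2, hux2⟩
    · omega
    · have huS : u ∈ Sset := ⟨j + 1, Der.step1 hdy2 hg2 hh2⟩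
      have hm : u ∈ SF.filter (H.Adj z) := by
        rw [Finset.mem_filter, hSF, Set.mem_toFinset]
        exact ⟨huS, hux2.symm⟩
      have hpos : 1 ≤ (SF.filter (H.Adj z)).card := Finset.card_pos.2 ⟨u, hm⟩
      omega
  have hTsub : TeF ⊆ TF := by
    intro z hz
    rw [hTeF, Set.mem_toFinset] at hz
    rw [hTF, Set.mem_toFinset]
    exact hTeT z hz
  -- the sums
  have hTmem : ∀ z ∈ TF, degS G Sset z + 1 ≤ a := by
    intro z hz
    rw [hTF, Set.mem_toFinset] at hz
    have := hz.2
    omega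
  have e1 : a * TF.card = ∑ z ∈ TF, degS G Sset z + ∑ z ∈ TF, (a - degS G Sset z) := by
    rw [← Finset.sum_add_distrib]
    rw [Finset.sum_congr rfl (fun z hz => by have := hTmem z hz; omega :
      ∀ z ∈ TF, degS G Sset z + (a - degS G Sset z) = a)]
    rw [Finset.sum_const, smul_eq_mul, mul_comm]
  have e2 : ∑ z ∈ TeF, (a - degS G Sset z) ≤ ∑ z ∈ TF, (a - degS G Sset z) :=
    Finset.sum_le_sum_of_subset hTsub
  have e3 : ∀ z ∈ TeF, (a - deg H z) + (SF.filter (H.Adj z)).card ≤ a - degS G Sset z := by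
    intro z hz
    rw [hTeF, Set.mem_toFinset] at hz
    have h1 := hdegS z hz
    have h2 := f1 z hz
    omega
  have e4 : ∑ z ∈ TeF, ((a - deg H z) + (SF.filter (H.Adj z)).card)
      ≤ ∑ z ∈ TeF, (a - degS G Sset z) := Finset.sum_le_sum e3
  have e5 : ∑ z ∈ TeF, ((a - deg H z) + (SF.filter (H.Adj z)).card)
      = ∑ z ∈ TeF, (a - deg H z) + ∑ z ∈ TeF, (SF.filter (H.Adj z)).card :=
    Finset.sum_add_distrib
  have hwTeF : w ∈ TeF := by rw [hTeF, Set.mem_toFinset]; exact hwTe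
  have e6 : 1 ≤ ∑ z ∈ TeF, (a - deg H z) := by
    have h1 : 1 ≤ a - deg H w := by omega
    calc 1 ≤ a - deg H w := h1
      _ ≤ ∑ z ∈ TeF, (a - deg H z) :=
        Finset.single_le_sum (f := fun z => a - deg H z) (fun _ _ => Nat.zero_le _) hwTeF
  have e7 : ∑ z ∈ TeF, (SF.filter (H.Adj z)).card = ∑ q ∈ SF, (TeF.filter (H.Adj q)).card :=
    doublecount H TeF SF
  have e8 : ∀ q ∈ SF, (TeF.filter (H.Adj q)).card = deg H q := by
    intro q hq
    rw [hSF, Set.mem_toFinset] at hq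
    rw [deg_eq_card]
    congr 1
    ext z
    simp only [Finset.mem_filter, hTeF, Set.mem_toFinset, SimpleGraph.mem_neighborSet]
    exact ⟨fun h => h.2, fun h => ⟨f4 q hq z h, h⟩⟩
  have e9 : ∑ q ∈ SF, (TeF.filter (H.Adj q)).card = b * SF.card := by
    rw [Finset.sum_congr rfl e8, Finset.sum_congr rfl (fun q hq => f2 q (by
      rw [hSF, Set.mem_toFinset] at hq; exact hq)), Finset.sum_const, smul_eq_mul, mul_comm]
  have hCs := hC Sset
  have hncS : Sset.ncard = SF.card := Set.ncard_eq_toFinset_card' _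
  have hncT : (Tset G Sset a).ncard = TF.card := Set.ncard_eq_toFinset_card' _
  have hdS : dSum G Sset (Tset G Sset a) = ∑ z ∈ TF, degS G Sset z := dSum_eq_sum G _ _
  rw [hncS, hncT, hdS] at hCs
  -- combine: a * TF.card ≥ (∑ degS over TF) + 1 + b * SF.card, contradiction
  linarith [e1, e2, e4, e5, e6, e7, e9, hCs]

end Sufficiency

section Necessity

variable {V : Type*} [Fintype V]

lemma necessity (G H : SimpleGraph V) (a b : ℕ) (hHG : H ≤ G)
    (hlo : ∀ v, a ≤ deg H v) (hup : ∀ v, deg H v ≤ b) (S : Set V) :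
    a * (Tset G S a).ncard ≤ b * S.ncard + dSum G S (Tset G S a) := by
  classical
  set SF := S.toFinset with hSF
  set TF := (Tset G S a).toFinset with hTF
  have hsplit : ∀ z : V, ((H.neighborSet z).toFinset \ SF).card + (SF.filter (H.Adj z)).card
      = deg H z := by
    intro z
    have hfe : SF.filter (H.Adj z) = (H.neighborSet z).toFinset ∩ SF := by
      ext q
      simp only [Finset.mem_filter, Finset.mem_inter, Set.mem_toFinset,
        SimpleGraph.mem_neighborSet]
      exact ⟨fun h => ⟨h.2, h.1⟩, fun h => ⟨h.2, h.1⟩⟩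
    rw [hfe, deg_eq_card, Finset.card_sdiff_add_card_inter]
  have hmono : ∀ z : V, ((H.neighborSet z).toFinset \ SF).card ≤ degS G S z := by
    intro z
    rw [degS_eq, ← hSF]
    apply Finset.card_le_card
    intro q hq
    rw [Finset.mem_sdiff] at hq ⊢
    exact ⟨by rw [Set.mem_toFinset] at hq ⊢; exact hHG hq.1, hq.2⟩
  have e1 : a * TF.card ≤ ∑ z ∈ TF, deg H z := by
    rw [mul_comm, ← smul_eq_mul, ← Finset.sum_const]
    exact Finset.sum_le_sum fun z _ => hlo z
  have e2 : ∑ z ∈ TF, deg H z ≤ ∑ z ∈ TF, degS G S z + ∑ z ∈ TF, (SF.filter (H.Adj z)).card := by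
    rw [← Finset.sum_add_distrib]
    refine Finset.sum_le_sum fun z _ => ?_
    have h1 := hsplit z
    have h2 := hmono z
    omega
  have e3 : ∑ z ∈ TF, (SF.filter (H.Adj z)).card = ∑ q ∈ SF, (TF.filter (H.Adj q)).card :=
    doublecount H TF SF
  have e4 : ∀ q ∈ SF, (TF.filter (H.Adj q)).card ≤ deg H q := by
    intro q _
    rw [deg_eq_card]
    apply Finset.card_le_card
    intro z hz
    rw [Finset.mem_filter] at hz
    rw [Set.mem_toFinset]
    exact hz.2
  have e5 : ∑ q ∈ SF, (TF.filter (H.Adj q)).card ≤ b * SF.card := by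
    calc ∑ q ∈ SF, (TF.filter (H.Adj q)).card ≤ ∑ q ∈ SF, deg H q :=
          Finset.sum_le_sum e4
      _ ≤ ∑ _q ∈ SF, b := Finset.sum_le_sum fun q _ => hup q
      _ = b * SF.card := by rw [Finset.sum_const, smul_eq_mul, mul_comm]
  have hncS : S.ncard = SF.card := Set.ncard_eq_toFinset_card' _
  have hncT : (Tset G S a).ncard = TF.card := Set.ncard_eq_toFinset_card' _
  have hdS : dSum G S (Tset G S a) = ∑ z ∈ TF, degS G S z := dSum_eq_sum G _ _
  rw [hncS, hncT, hdS]
  linarith [e1, e2, e3, e5]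

end Necessity

section Translate

variable {V : Type*} [Fintype V]

lemma degS_induce (G : SimpleGraph V) (V' A : Set V) (x : ↥(V'ᶜ)) :
    degS (SimpleGraph.induce V'ᶜ G) (Subtype.val ⁻¹' A) x = degS G (V' ∪ A) x.val := by
  have him : Subtype.val '' ((SimpleGraph.induce V'ᶜ G).neighborSet x \ (Subtype.val ⁻¹' A))
      = G.neighborSet x.val \ (V' ∪ A) := by
    ext q
    constructor
    · rintro ⟨⟨q', hq'⟩, ⟨hadj, hnA⟩, rfl⟩
      refine ⟨hadj, ?_⟩
      rintro (hqV | hqA)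
      · exact hq' hqV
      · exact hnA hqA
    · rintro ⟨hadj, hnS⟩
      exact ⟨⟨q, fun h => hnS (Or.inl h)⟩, ⟨hadj, fun h => hnS (Or.inr h)⟩, rfl⟩
  rw [degS, degS, ← him, Set.ncard_image_of_injective _ Subtype.val_injective]

lemma tset_image (G : SimpleGraph V) (a : ℕ) (V' A : Set V) :
    Subtype.val '' (Tset (SimpleGraph.induce V'ᶜ G) (Subtype.val ⁻¹' A) a)
      = Tset G (V' ∪ A) a := by
  ext q
  constructor
  · rintro ⟨⟨q', hq'⟩, ⟨hnS, hdeg⟩, rfl⟩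
    refine ⟨?_, ?_⟩
    · rintro (h | h)
      · exact hq' h
      · exact hnS h
    · rw [← degS_induce G V' A ⟨q', hq'⟩]
      exact hdeg
  · rintro ⟨hnS, hdeg⟩
    refine ⟨⟨q, fun h => hnS (Or.inl h)⟩, ⟨fun h => hnS (Or.inr h), ?_⟩, rfl⟩
    rw [degS_induce G V' A _]
    exact hdeg

lemma tset_ncard_induce (G : SimpleGraph V) (a : ℕ) (V' A : Set V) :
    (Tset (SimpleGraph.induce V'ᶜ G) (Subtype.val ⁻¹' A) a).ncard
      = (Tset G (V' ∪ A) a).ncard := by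
  rw [← tset_image G a V' A, Set.ncard_image_of_injective _ Subtype.val_injective]

lemma dsum_induce (G : SimpleGraph V) (a : ℕ) (V' A : Set V) :
    dSum (SimpleGraph.induce V'ᶜ G) (Subtype.val ⁻¹' A)
        (Tset (SimpleGraph.induce V'ᶜ G) (Subtype.val ⁻¹' A) a)
      = dSum G (V' ∪ A) (Tset G (V' ∪ A) a) := by
  rw [dSum, dSum, ← tset_image G a V' A,
    finsum_mem_image Subtype.val_injective.injOn]
  exact finsum_mem_congr rfl (fun x _ => degS_induce G V' A x)

lemma preimage_ncard (V' A : Set V) (hA : A ⊆ V'ᶜ) :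
    (Subtype.val ⁻¹' A : Set ↥(V'ᶜ)).ncard = A.ncard := by
  have him : Subtype.val '' (Subtype.val ⁻¹' A : Set ↥(V'ᶜ)) = A := by
    rw [Set.image_preimage_eq_inter_range, Subtype.range_coe]
    exact Set.inter_eq_self_of_subset_left hA
  rw [← Set.ncard_image_of_injective (Subtype.val ⁻¹' A : Set ↥(V'ᶜ)) Subtype.val_injective, him]

end Translate


theorem stmt_2 {V : Type*} [Fintype V] (G : SimpleGraph V) (a b n : ℕ)
    (ha : 1 ≤ a) (hab : a < b) (hn : 1 ≤ n) :
    (∀ V' : Set V, V'.ncard = n → HasABFactor (SimpleGraph.induce V'ᶜ G) a b) ↔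
      ∀ S : Set V, n ≤ S.ncard →
        a * (Tset G S a).ncard + b * n ≤ b * S.ncard + dSum G S (Tset G S a) := by
  constructor
  · intro hL S hS
    obtain ⟨V', hV'S, hV'card⟩ := Set.exists_subset_card_eq hS
    obtain ⟨H', hH'le, hH'deg⟩ := hL V' hV'card
    set A := S \ V' with hAdef
    have hA : A ⊆ V'ᶜ := fun x hx => hx.2
    have hSA : V' ∪ A = S := Set.union_diff_cancel hV'S
    have hdisj : Disjoint V' A := Set.disjoint_left.mpr fun x hxV hxA => hA hxA hxV
    have hnec := necessity (SimpleGraph.induce V'ᶜ G) H' a b hH'le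
      (fun v => (hH'deg v).1) (fun v => (hH'deg v).2) (Subtype.val ⁻¹' A)
    rw [tset_ncard_induce G a V' A, preimage_ncard V' A hA, dsum_induce G a V' A, hSA] at hnec
    have hcard : S.ncard = n + A.ncard := by
      rw [← hSA, Set.ncard_union_eq hdisj, hV'card]
    have hmul : b * S.ncard = b * n + b * A.ncard := by rw [hcard, Nat.mul_add]
    linarith [hnec]
  · intro hR V' hV'
    apply sufficiency _ a b ha hab
    intro S'
    set A := Subtype.val '' S' with hAdef
    have hA : A ⊆ V'ᶜ := by
      rintro q ⟨x, _, rfl⟩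
      exact x.2
    have hS'A : Subtype.val ⁻¹' A = S' := Set.preimage_image_eq _ Subtype.val_injective
    have hdisj : Disjoint V' A := Set.disjoint_left.mpr fun x hxV hxA => hA hxA hxV
    have hcard : (V' ∪ A).ncard = n + A.ncard := by
      rw [Set.ncard_union_eq hdisj, hV']
    have hge : n ≤ (V' ∪ A).ncard := by omega
    have h := hR (V' ∪ A) hge
    rw [← hS'A, tset_ncard_induce G a V' A, preimage_ncard V' A hA, dsum_induce G a V' A]
    rw [hcard, Nat.mul_add] at h
    omega
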